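/- The blossom is the unique symmetric multi-affine function with the diagonal property: if q' : ℝ^{δ_1+⋯+δ_n} → ℝ is (1) multi-affine (of degree at most 1 in each argument z_{k,l}), (2) symmetric within each block (q'(z) = q'(z') whenever z ≅ z'), and (3) satisfies q'(z_1,…,z_1,…,z_n,…,z_n) = p(z_1,…,z_n) for all (z_1,…,z_n) ∈ ℝ^n (each z_k repeated δ_k times), then q' equals the blossom q of p. -/

import Mathlib

open Finset

/-- The normalized elementary symmetric polynomial
`B_{l,δ}(z) = binom(δ,l)⁻¹ ∑_{1≤σ₁<⋯<σ_l≤δ} z_{σ₁}⋯z_{σ_l}`. -/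
noncomputable def normEsymm (δ l : ℕ) (z : Fin δ → ℝ) : ℝ :=
  ((δ.choose l : ℝ))⁻¹ * ∑ s ∈ Finset.powersetCard l (Finset.univ : Finset (Fin δ)),
    ∏ i ∈ s, z i

/-- The polynomial `p(x) = ∑_{l ∈ Δ} c_l x₁^{l₁}⋯x_n^{l_n}` with coefficients `c`,
where `Δ = {0,…,δ₁} × ⋯ × {0,…,δ_n}`. -/
noncomputable def polyOf {n : ℕ} {δ : Fin n → ℕ} (c : (∀ k, Fin (δ k + 1)) → ℝ)
    (x : Fin n → ℝ) : ℝ :=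
  ∑ l : ∀ k, Fin (δ k + 1), c l * ∏ k, x k ^ (l k : ℕ)

/-- The blossom `q(z) = ∑_{l ∈ Δ} c_l ∏_k B_{l_k,δ_k}(z_{k,1},…,z_{k,δ_k})` of the
polynomial with coefficients `c`. -/
noncomputable def blossomOf {n : ℕ} {δ : Fin n → ℕ} (c : (∀ k, Fin (δ k + 1)) → ℝ)
    (z : ∀ k, Fin (δ k) → ℝ) : ℝ :=
  ∑ l : ∀ k, Fin (δ k + 1), c l * ∏ k, normEsymm (δ k) (l k) (z k)

/-- A function of the blocked variables `z = (z_{k,i})` is multi-affine if it is affine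
(degree at most 1) in each single argument `z_{k,i}`. -/
def MultiAffineB {n : ℕ} (δ : Fin n → ℕ) (q : (∀ k, Fin (δ k) → ℝ) → ℝ) : Prop :=
  ∀ (k : Fin n) (i : Fin (δ k)) (z : ∀ k, Fin (δ k) → ℝ) (s t θ : ℝ),
    q (Function.update z k (Function.update (z k) i (θ * s + (1 - θ) * t)))
      = θ * q (Function.update z k (Function.update (z k) i s))
        + (1 - θ) * q (Function.update z k (Function.update (z k) i t))

/-- `z ≅ z'` : each block of `z` is a permutation of the corresponding block of `z'`. -/
def BlockRel {n : ℕ} (δ : Fin n → ℕ) (z z' : ∀ k, Fin (δ k) → ℝ) : Prop :=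
  ∀ k, ∃ π : Equiv.Perm (Fin (δ k)), ∀ i, z k i = z' k (π i)


set_option linter.unusedSectionVars false
set_option linter.unusedVariables false

section Expansion
variable {I : Type*} [DecidableEq I]

/-- evaluation point: indicator of `T` on `U`, `w` off `U`. -/
def EE (U T : Finset I) (w : I → ℝ) : I → ℝ :=
  fun j => if j ∈ U then (if j ∈ T then 1 else 0) else w j

lemma EE_update_zero (a : I) (U T : Finset I) (w : I → ℝ) (ha : a ∉ U) (haT : a ∉ T) :
    EE U T (Function.update w a 0) = EE (insert a U) T w := by
  funext j
  rcases eq_or_ne j a with rfl | hj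
  · simp [EE, ha, haT]
  · simp [EE, Function.update_of_ne hj, Finset.mem_insert, hj]

lemma EE_update_one (a : I) (U T : Finset I) (w : I → ℝ) (ha : a ∉ U) (haT : a ∉ T) :
    EE U T (Function.update w a 1) = EE (insert a U) (insert a T) w := by
  funext j
  rcases eq_or_ne j a with rfl | hj
  · simp [EE, ha]
  · simp [EE, Function.update_of_ne hj, Finset.mem_insert, hj]

variable (Q : (I → ℝ) → ℝ)
variable (hQ : ∀ (j : I) (w : I → ℝ) (s t θ : ℝ),
    Q (Function.update w j (θ*s+(1-θ)*t))
      = θ * Q (Function.update w j s) + (1-θ) * Q (Function.update w j t))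

include hQ in
lemma affine_two_point (j : I) (w : I → ℝ) :
    Q w = w j * Q (Function.update w j 1) + (1 - w j) * Q (Function.update w j 0) := by
  have h := hQ j w 1 0 (w j)
  simpa using h

include hQ in
lemma expansion_aux (U : Finset I) :
    ∀ w, Q w = ∑ S ∈ U.powerset, (∏ j ∈ S, w j) *
      ∑ T ∈ S.powerset, (-1:ℝ)^(S.card - T.card) * Q (EE U T w) := by
  induction U using Finset.induction with
  | empty =>
    intro w
    simp only [Finset.powerset_empty, Finset.sum_singleton, Finset.prod_empty, Finset.card_empty,
      pow_zero, one_mul]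
    have : EE (∅:Finset I) ∅ w = w := by funext j; simp [EE]
    simp [this]
  | @insert a U' ha IH =>
    intro w
    rw [affine_two_point Q hQ a w, IH (Function.update w a 1), IH (Function.update w a 0),
      Finset.sum_powerset_insert ha, Finset.mul_sum, Finset.mul_sum, ← Finset.sum_add_distrib,
      ← Finset.sum_add_distrib]
    refine Finset.sum_congr rfl ?_
    intro S hS
    rw [Finset.mem_powerset] at hS
    have haS : a ∉ S := fun h => ha (hS h)
    -- products agree
    have hP1 : (∏ j ∈ S, Function.update w a (1:ℝ) j) = ∏ j ∈ S, w j := by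
      refine Finset.prod_congr rfl fun j hj => ?_
      exact Function.update_of_ne (by rintro rfl; exact haS hj) _ _
    have hP0 : (∏ j ∈ S, Function.update w a (0:ℝ) j) = ∏ j ∈ S, w j := by
      refine Finset.prod_congr rfl fun j hj => ?_
      exact Function.update_of_ne (by rintro rfl; exact haS hj) _ _
    have hg1 : (∑ T ∈ S.powerset, (-1:ℝ)^(S.card - T.card) * Q (EE U' T (Function.update w a 1)))
        = ∑ T ∈ S.powerset, (-1:ℝ)^(S.card - T.card) * Q (EE (insert a U') (insert a T) w) := by
      refine Finset.sum_congr rfl fun T hT => ?_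
      rw [Finset.mem_powerset] at hT
      rw [EE_update_one a U' T w ha (fun h => haS (hT h))]
    have hg0 : (∑ T ∈ S.powerset, (-1:ℝ)^(S.card - T.card) * Q (EE U' T (Function.update w a 0)))
        = ∑ T ∈ S.powerset, (-1:ℝ)^(S.card - T.card) * Q (EE (insert a U') T w) := by
      refine Finset.sum_congr rfl fun T hT => ?_
      rw [Finset.mem_powerset] at hT
      rw [EE_update_zero a U' T w ha (fun h => haS (hT h))]
    rw [hP1, hP0, hg1, hg0]
    -- now expand f (insert a S)
    have hins : (∏ j ∈ insert a S, w j) = w a * ∏ j ∈ S, w j := Finset.prod_insert haS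
    rw [hins, Finset.sum_powerset_insert haS, Finset.card_insert_of_notMem haS]
    have hsign0 : (∑ T ∈ S.powerset, (-1:ℝ)^(S.card + 1 - T.card) * Q (EE (insert a U') T w))
        = - ∑ T ∈ S.powerset, (-1:ℝ)^(S.card - T.card) * Q (EE (insert a U') T w) := by
      rw [← Finset.sum_neg_distrib]
      refine Finset.sum_congr rfl fun T hT => ?_
      rw [Finset.mem_powerset] at hT
      have hc : T.card ≤ S.card := Finset.card_le_card hT
      have : S.card + 1 - T.card = (S.card - T.card) + 1 := by omega
      rw [this, pow_succ]
      ring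
    have hsign1 : (∑ T ∈ S.powerset, (-1:ℝ)^(S.card + 1 - (insert a T).card) * Q (EE (insert a U') (insert a T) w))
        = ∑ T ∈ S.powerset, (-1:ℝ)^(S.card - T.card) * Q (EE (insert a U') (insert a T) w) := by
      refine Finset.sum_congr rfl fun T hT => ?_
      rw [Finset.mem_powerset] at hT
      have haT : a ∉ T := fun h => haS (hT h)
      rw [Finset.card_insert_of_notMem haT]
      have hc : T.card ≤ S.card := Finset.card_le_card hT
      have : S.card + 1 - (T.card + 1) = S.card - T.card := by omega
      rw [this]
    rw [hsign0, hsign1]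
    ring

include hQ in
lemma expansion [Fintype I] (w : I → ℝ) :
    Q w = ∑ S : Finset I, (∏ j ∈ S, w j) *
      ∑ T ∈ S.powerset, (-1:ℝ)^(S.card - T.card) *
        Q (fun j => if j ∈ T then 1 else 0) := by
  have h := expansion_aux Q hQ Finset.univ w
  rw [Finset.powerset_univ] at h
  rw [h]
  refine Finset.sum_congr rfl fun S _ => ?_
  congr 1
  refine Finset.sum_congr rfl fun T _ => ?_
  have : EE (Finset.univ) T w = fun j => if j ∈ T then (1:ℝ) else 0 := by funext j; simp [EE]
  rw [this]
end Expansion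

section SigmaPi
variable {ι : Type*} [Fintype ι] [DecidableEq ι] {β : ι → Type*}
  [∀ i, Fintype (β i)] [∀ i, DecidableEq (β i)]

def toSig (f : ∀ i, Finset (β i)) : Finset (Σ i, β i) := Finset.univ.sigma f

lemma mem_toSig {f : ∀ i, Finset (β i)} {j : Σ i, β i} : j ∈ toSig f ↔ j.2 ∈ f j.1 := by
  simp [toSig, Finset.mem_sigma]

noncomputable def sigEquiv : (∀ i, Finset (β i)) ≃ Finset (Σ i, β i) where
  toFun := toSig
  invFun S i := S.preimage (Sigma.mk i) (sigma_mk_injective.injOn)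
  left_inv f := by funext i; ext b; simp [toSig, Finset.mem_preimage]
  right_inv S := by ext ⟨i, b⟩; simp [toSig, Finset.mem_preimage]

lemma sum_finset_sigma (F : Finset (Σ i, β i) → ℝ) :
    ∑ S : Finset (Σ i, β i), F S = ∑ f : ∀ i, Finset (β i), F (toSig f) :=
  (Equiv.sum_comp (sigEquiv (β := β)) F).symm

lemma card_toSig (f : ∀ i, Finset (β i)) : (toSig f).card = ∑ i, (f i).card :=
  Finset.card_sigma _ _

lemma prod_toSig (f : ∀ i, Finset (β i)) (z : ∀ i, β i → ℝ) :
    (∏ j ∈ toSig f, z j.1 j.2) = ∏ i, ∏ b ∈ f i, z i b :=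
  Finset.prod_sigma _ _ _

lemma sum_powerset_toSig (f : ∀ i, Finset (β i)) (F : Finset (Σ i, β i) → ℝ) :
    ∑ T ∈ (toSig f).powerset, F T
      = ∑ g ∈ Fintype.piFinset (fun i => (f i).powerset), F (toSig g) := by
  refine Finset.sum_bij' (fun T _ => fun i => T.preimage (Sigma.mk i) (sigma_mk_injective.injOn))
    (fun g _ => toSig g) ?_ ?_ ?_ ?_ ?_
  · intro T hT
    rw [Finset.mem_powerset] at hT
    simp only [Fintype.mem_piFinset, Finset.mem_powerset]
    intro i b hb
    rw [Finset.mem_preimage] at hb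
    have := hT hb
    rw [mem_toSig] at this
    exact this
  · intro g hg
    simp only [Fintype.mem_piFinset, Finset.mem_powerset] at hg
    rw [Finset.mem_powerset]
    intro j hj
    rw [mem_toSig] at hj ⊢
    exact hg j.1 hj
  · intro T hT
    ext ⟨i, b⟩
    simp [mem_toSig, Finset.mem_preimage]
  · intro g hg
    funext i
    ext b
    simp [mem_toSig, Finset.mem_preimage]
  · intro T hT
    congr 1
    ext ⟨i, b⟩
    simp [mem_toSig, Finset.mem_preimage]
end SigmaPi

lemma exists_perm_of_card_eq {m : ℕ} (s t : Finset (Fin m)) (h : s.card = t.card) :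
    ∃ π : Equiv.Perm (Fin m), ∀ i, i ∈ s ↔ π i ∈ t := by
  have h1 : Fintype.card {x // x ∈ s} = Fintype.card {x // x ∈ t} := by
    simp [Fintype.card_coe, h]
  have h2 : Fintype.card {x : Fin m // ¬ x ∈ s} = Fintype.card {x : Fin m // ¬ x ∈ t} := by
    rw [Fintype.card_subtype_compl, Fintype.card_subtype_compl, h1]
  refine ⟨Equiv.subtypeCongr (Fintype.equivOfCardEq h1) (Fintype.equivOfCardEq h2), fun i => ?_⟩
  by_cases hi : i ∈ s
  · simp only [Equiv.subtypeCongr, Equiv.trans_apply, Equiv.sumCompl_symm_apply_of_pos hi,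
      Equiv.sumCongr_apply, Sum.map_inl, Equiv.sumCompl_apply_inl]
    exact iff_of_true hi (Fintype.equivOfCardEq h1 ⟨i, hi⟩).2
  · simp only [Equiv.subtypeCongr, Equiv.trans_apply, Equiv.sumCompl_symm_apply_of_neg hi,
      Equiv.sumCongr_apply, Sum.map_inr, Equiv.sumCompl_apply_inr]
    exact iff_of_false hi (Fintype.equivOfCardEq h2 ⟨i, hi⟩).2

set_option linter.unusedSectionVars false

section Main
variable {n : ℕ} {δ : Fin n → ℕ}

def cardVec (g : ∀ k, Finset (Fin (δ k))) : ∀ k, Fin (δ k + 1) :=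
  fun k => ⟨(g k).card, Nat.lt_succ_of_le (le_trans (Finset.card_le_univ _) (by simp))⟩

@[simp] lemma cardVec_val (g : ∀ k, Finset (Fin (δ k))) (k : Fin n) :
    (cardVec g k : ℕ) = (g k).card := rfl

def chiB (g : ∀ k, Finset (Fin (δ k))) : ∀ k, Fin (δ k) → ℝ :=
  fun k i => if i ∈ g k then 1 else 0

def canonSet (d m : ℕ) : Finset (Fin d) := Finset.univ.filter (fun i => (i : ℕ) < m)

lemma canonSet_card {d m : ℕ} (hm : m ≤ d) : (canonSet d m).card = m := by
  have : canonSet d m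
      = (Finset.univ : Finset (Fin m)).map ⟨Fin.castLE hm, Fin.castLE_injective hm⟩ := by
    ext i
    simp only [canonSet, Finset.mem_filter, Finset.mem_univ, true_and, Finset.mem_map,
      Function.Embedding.coeFn_mk]
    constructor
    · intro hi; exact ⟨⟨i, hi⟩, rfl⟩
    · rintro ⟨a, rfl⟩; exact a.2
  rw [this, Finset.card_map, Finset.card_univ, Fintype.card_fin]

def canonG (m : ∀ k, Fin (δ k + 1)) : ∀ k, Finset (Fin (δ k)) :=
  fun k => canonSet (δ k) (m k)

lemma canonG_card (m : ∀ k, Fin (δ k + 1)) (k : Fin n) : ((canonG m) k).card = (m k : ℕ) :=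
  canonSet_card (Nat.lt_succ_iff.mp (m k).2)

lemma filter_cardVec_piFinset (t : ∀ k, Finset (Fin (δ k))) (m : ∀ k, Fin (δ k + 1)) :
    (Fintype.piFinset (fun k => (t k).powerset)).filter (fun g => cardVec g = m)
      = Fintype.piFinset (fun k => Finset.powersetCard (m k) (t k)) := by
  ext g
  simp only [Finset.mem_filter, Fintype.mem_piFinset, Finset.mem_powerset,
    Finset.mem_powersetCard, funext_iff]
  constructor
  · rintro ⟨h1, h2⟩ k
    refine ⟨h1 k, ?_⟩
    have := h2 k
    rwa [Fin.ext_iff] at this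
  · intro h
    exact ⟨fun k => (h k).1, fun k => Fin.ext (by simpa using (h k).2)⟩

lemma sum_piFinset_fiber (t : ∀ k, Finset (Fin (δ k))) (H : (∀ k, Finset (Fin (δ k))) → ℝ) :
    ∑ g ∈ Fintype.piFinset (fun k => (t k).powerset), H g
      = ∑ m : ∀ k, Fin (δ k + 1),
          ∑ g ∈ Fintype.piFinset (fun k => Finset.powersetCard (m k) (t k)), H g := by
  rw [← Finset.sum_fiberwise_of_maps_to (g := cardVec) (t := Finset.univ)
    (fun g _ => Finset.mem_univ _) H]
  exact Finset.sum_congr rfl fun m _ => by rw [filter_cardVec_piFinset]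

lemma sum_piFinset_card (t : ∀ k, Finset (Fin (δ k))) (F : (∀ k, Fin (δ k + 1)) → ℝ) :
    ∑ g ∈ Fintype.piFinset (fun k => (t k).powerset), F (cardVec g)
      = ∑ m : ∀ k, Fin (δ k + 1), (∏ k, ((t k).card.choose (m k) : ℝ)) * F m := by
  rw [sum_piFinset_fiber]
  refine Finset.sum_congr rfl fun m _ => ?_
  have hval : ∀ g ∈ Fintype.piFinset (fun k => Finset.powersetCard (m k) (t k)),
      F (cardVec g) = F m := by
    intro g hg
    simp only [Fintype.mem_piFinset, Finset.mem_powersetCard] at hg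
    congr 1
    funext k
    exact Fin.ext (by simpa using (hg k).2)
  rw [Finset.sum_congr rfl hval, Finset.sum_const, Fintype.card_piFinset, nsmul_eq_mul]
  congr 1
  rw [Nat.cast_prod]
  exact Finset.prod_congr rfl fun k _ => by rw [Finset.card_powersetCard]

end Main

variable {n : ℕ} {δ : Fin n → ℕ}

lemma update_sigma (w : (Σ k : Fin n, Fin (δ k)) → ℝ) (a : Fin n) (b : Fin (δ a)) (v : ℝ) :
    (fun k i => Function.update w ⟨a, b⟩ v ⟨k, i⟩)
      = Function.update (fun k i => w ⟨k, i⟩) a (Function.update (fun i => w ⟨a, i⟩) b v) := by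
  funext k
  rcases eq_or_ne k a with rfl | hk
  · funext i
    rcases eq_or_ne i b with rfl | hi
    · simp
    · rw [Function.update_of_ne (by simp [hi]), Function.update_self,
        Function.update_of_ne hi]
  · rw [Function.update_of_ne hk]
    funext i
    rw [Function.update_of_ne (by simp [hk])]
section QPart
variable {n : ℕ} {δ : Fin n → ℕ} (q' : (∀ k, Fin (δ k) → ℝ) → ℝ)

noncomputable def Efun (m : ∀ k, Fin (δ k + 1)) : ℝ := q' (chiB (canonG m))

noncomputable def Gfun (m : ∀ k, Fin (δ k + 1)) : ℝ :=
  ∑ m' : ∀ k, Fin (δ k + 1), (∏ k, (((m k : ℕ)).choose (m' k) : ℝ)) *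
    ((-1 : ℝ) ^ ((∑ k, (m k : ℕ)) - ∑ k, (m' k : ℕ)) * Efun q' m')

lemma chiB_eq (h2 : ∀ z z' : ∀ k, Fin (δ k) → ℝ, BlockRel δ z z' → q' z = q' z')
    (g : ∀ k, Finset (Fin (δ k))) :
    q' (chiB g) = Efun q' (cardVec g) := by
  apply h2
  intro k
  obtain ⟨π, hπ⟩ := exists_perm_of_card_eq (g k) (canonG (cardVec g) k)
    (by rw [canonG_card, cardVec_val])
  refine ⟨π, fun i => ?_⟩
  simp only [chiB]
  exact if_congr (hπ i) rfl rfl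

lemma q'_expansion (h1 : MultiAffineB δ q')
    (h2 : ∀ z z' : ∀ k, Fin (δ k) → ℝ, BlockRel δ z z' → q' z = q' z')
    (z : ∀ k, Fin (δ k) → ℝ) :
    q' z = ∑ f : ∀ k, Finset (Fin (δ k)),
      (∏ k, ∏ i ∈ f k, z k i) * Gfun q' (cardVec f) := by
  classical
  set Q : ((Σ k : Fin n, Fin (δ k)) → ℝ) → ℝ := fun w => q' (fun k i => w ⟨k, i⟩) with hQdef
  have hQ : ∀ (j : Σ k : Fin n, Fin (δ k)) (w : (Σ k : Fin n, Fin (δ k)) → ℝ) (s t θ : ℝ),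
      Q (Function.update w j (θ * s + (1 - θ) * t))
        = θ * Q (Function.update w j s) + (1 - θ) * Q (Function.update w j t) := by
    rintro ⟨a, b⟩ w s t θ
    simp only [hQdef]
    rw [update_sigma, update_sigma, update_sigma]
    exact h1 a b (fun k i => w ⟨k, i⟩) s t θ
  have hexp := expansion Q hQ (fun j => z j.1 j.2)
  have hz : Q (fun j => z j.1 j.2) = q' z := rfl
  rw [hz] at hexp
  rw [hexp, sum_finset_sigma]
  refine Finset.sum_congr rfl fun f _ => ?_
  rw [prod_toSig]
  congr 1
  calc (∑ T ∈ (toSig f).powerset, (-1:ℝ) ^ ((toSig f).card - T.card) *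
          Q (fun j => if j ∈ T then 1 else 0))
      = ∑ g ∈ Fintype.piFinset (fun k => (f k).powerset),
          (fun m' => (-1:ℝ) ^ ((∑ k, (f k).card) - ∑ k, (m' k : ℕ)) * Efun q' m')
            (cardVec g) := by
        rw [sum_powerset_toSig]
        refine Finset.sum_congr rfl fun g _ => ?_
        simp only
        rw [card_toSig, card_toSig]
        congr 1
        have hch : (fun (k : Fin n) (i : Fin (δ k)) =>
            if (⟨k, i⟩ : Σ k : Fin n, Fin (δ k)) ∈ toSig g then (1:ℝ) else 0) = chiB g := by
          funext k i
          simp [mem_toSig, chiB]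
        show q' (fun k i => if (⟨k, i⟩ : Σ k : Fin n, Fin (δ k)) ∈ toSig g then (1:ℝ) else 0)
          = Efun q' (cardVec g)
        rw [hch, chiB_eq q' h2 g]
    _ = ∑ m' : ∀ k, Fin (δ k + 1), (∏ k, ((f k).card.choose (m' k) : ℝ)) *
          ((-1:ℝ) ^ ((∑ k, (f k).card) - ∑ k, (m' k : ℕ)) * Efun q' m') :=
        sum_piFinset_card f (fun m' => (-1:ℝ) ^ ((∑ k, (f k).card) - ∑ k, (m' k : ℕ)) * Efun q' m')
    _ = Gfun q' (cardVec f) := rfl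

lemma q'_diag (h1 : MultiAffineB δ q')
    (h2 : ∀ z z' : ∀ k, Fin (δ k) → ℝ, BlockRel δ z z' → q' z = q' z')
    (x : Fin n → ℝ) :
    q' (fun k _ => x k) = ∑ m : ∀ k, Fin (δ k + 1),
      ((∏ k, ((δ k).choose (m k) : ℝ)) * Gfun q' m) * ∏ k, x k ^ (m k : ℕ) := by
  rw [q'_expansion q' h1 h2]
  have huniv : (Finset.univ : Finset (∀ k, Finset (Fin (δ k))))
      = Fintype.piFinset (fun k => ((Finset.univ : Finset (Fin (δ k)))).powerset) := by
    ext f; simp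
  rw [huniv]
  calc (∑ f ∈ Fintype.piFinset (fun k => ((Finset.univ : Finset (Fin (δ k)))).powerset),
          (∏ k, ∏ _i ∈ f k, x k) * Gfun q' (cardVec f))
      = ∑ f ∈ Fintype.piFinset (fun k => ((Finset.univ : Finset (Fin (δ k)))).powerset),
          (fun m => Gfun q' m * ∏ k, x k ^ (m k : ℕ)) (cardVec f) := by
        refine Finset.sum_congr rfl fun f _ => ?_
        simp only [Finset.prod_const, cardVec_val]
        ring
    _ = ∑ m : ∀ k, Fin (δ k + 1),
          (∏ k, ((Finset.univ : Finset (Fin (δ k))).card.choose (m k) : ℝ)) *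
            (Gfun q' m * ∏ k, x k ^ (m k : ℕ)) :=
          sum_piFinset_card (fun k => (Finset.univ : Finset (Fin (δ k)))) (fun m => Gfun q' m * ∏ k, x k ^ (m k : ℕ))
    _ = _ := by
        refine Finset.sum_congr rfl fun m _ => ?_
        simp only [Finset.card_univ, Fintype.card_fin]
        ring

end QPart

lemma coeff_eq {n : ℕ} {δ : Fin n → ℕ} {a b : (∀ k, Fin (δ k + 1)) → ℝ}
    (h : ∀ x : Fin n → ℝ,
      (∑ m : ∀ k, Fin (δ k + 1), a m * ∏ k, x k ^ (m k : ℕ))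
        = ∑ m : ∀ k, Fin (δ k + 1), b m * ∏ k, x k ^ (m k : ℕ)) : a = b := by
  classical
  set s : (∀ k, Fin (δ k + 1)) → (Fin n →₀ ℕ) :=
    fun m => Finsupp.equivFunOnFinite.symm (fun k => (m k : ℕ)) with hs
  have hsinj : Function.Injective s := by
    intro m m' hmm
    have h2 := Finsupp.equivFunOnFinite.symm.injective hmm
    funext k
    exact Fin.ext (congrFun h2 k)
  have heval : ∀ (g : (∀ k, Fin (δ k + 1)) → ℝ) (x : Fin n → ℝ),
      MvPolynomial.eval x (∑ m : ∀ k, Fin (δ k + 1), MvPolynomial.monomial (s m) (g m))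
        = ∑ m : ∀ k, Fin (δ k + 1), g m * ∏ k, x k ^ (m k : ℕ) := by
    intro g x
    rw [map_sum]
    refine Finset.sum_congr rfl fun m _ => ?_
    rw [MvPolynomial.eval_monomial]
    congr 1
    rw [Finsupp.prod_fintype _ _ (fun k => pow_zero _)]
    refine Finset.prod_congr rfl fun k _ => ?_
    congr 1
  have hP : (∑ m : ∀ k, Fin (δ k + 1), MvPolynomial.monomial (s m) (a m))
      = ∑ m : ∀ k, Fin (δ k + 1), MvPolynomial.monomial (s m) (b m) := by
    apply MvPolynomial.funext
    intro x
    rw [heval, heval]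
    exact h x
  funext m
  have hco := congrArg (MvPolynomial.coeff (s m)) hP
  simp only [MvPolynomial.coeff_sum, MvPolynomial.coeff_monomial] at hco
  have key : ∀ g : (∀ k, Fin (δ k + 1)) → ℝ,
      (∑ m' : ∀ k, Fin (δ k + 1), if s m' = s m then g m' else 0) = g m := by
    intro g
    rw [Finset.sum_eq_single m]
    · simp
    · intro m' _ hne
      rw [if_neg (fun hc => hne (hsinj hc))]
    · intro hm
      exact absurd (Finset.mem_univ m) hm
  rw [key, key] at hco
  exact hco

/-- The blossom is the unique symmetric multi-affine function with the diagonal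
property: any `q'` which is (1) multi-affine in each argument, (2) symmetric within
each block, and (3) agrees with `p` on the diagonal, equals the blossom of `p`. -/
theorem stmt_4 {n : ℕ} (δ : Fin n → ℕ) (hδ : ∀ k, 1 ≤ δ k)
    (c : (∀ k, Fin (δ k + 1)) → ℝ)
    (q' : (∀ k, Fin (δ k) → ℝ) → ℝ)
    (h1 : MultiAffineB δ q')
    (h2 : ∀ z z' : ∀ k, Fin (δ k) → ℝ, BlockRel δ z z' → q' z = q' z')
    (h3 : ∀ x : Fin n → ℝ, q' (fun k _ => x k) = polyOf c x) :
    q' = blossomOf c := by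
  classical
  funext z
  have hcoef : (fun m : ∀ k, Fin (δ k + 1) =>
      (∏ k, ((δ k).choose (m k) : ℝ)) * Gfun q' m) = c := by
    apply coeff_eq
    intro x
    exact ((q'_diag q' h1 h2 x).symm.trans (h3 x))
  have hG : ∀ m : ∀ k, Fin (δ k + 1),
      Gfun q' m = c m * ∏ k, (((δ k).choose (m k) : ℝ))⁻¹ := by
    intro m
    have h0 : (∏ k, ((δ k).choose (m k) : ℝ)) ≠ 0 := by
      rw [Finset.prod_ne_zero_iff]
      intro k _
      exact_mod_cast (Nat.choose_pos (Nat.lt_succ_iff.mp (m k).2)).ne'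
    have hc := congrFun hcoef m
    rw [Finset.prod_inv_distrib, ← hc,
      mul_comm (∏ k, ((δ k).choose (m k) : ℝ)) (Gfun q' m), mul_assoc,
      mul_inv_cancel₀ h0, mul_one]
  rw [q'_expansion q' h1 h2 z]
  have huniv : (Finset.univ : Finset (∀ k, Finset (Fin (δ k))))
      = Fintype.piFinset (fun k => ((Finset.univ : Finset (Fin (δ k)))).powerset) := by
    ext f; simp
  rw [huniv, sum_piFinset_fiber]
  show _ = blossomOf c z
  rw [blossomOf]
  refine Finset.sum_congr rfl fun m _ => ?_
  have hfib : ∀ f ∈ Fintype.piFinset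
      (fun k => Finset.powersetCard (m k) (Finset.univ : Finset (Fin (δ k)))),
      cardVec f = m := by
    intro f hf
    simp only [Fintype.mem_piFinset, Finset.mem_powersetCard] at hf
    funext k
    exact Fin.ext (by simpa using (hf k).2)
  calc (∑ f ∈ Fintype.piFinset
          (fun k => Finset.powersetCard (m k) (Finset.univ : Finset (Fin (δ k)))),
        (∏ k, ∏ i ∈ f k, z k i) * Gfun q' (cardVec f))
      = ∑ f ∈ Fintype.piFinset
          (fun k => Finset.powersetCard (m k) (Finset.univ : Finset (Fin (δ k)))),
        (∏ k, ∏ i ∈ f k, z k i) * (c m * ∏ k, (((δ k).choose (m k) : ℝ))⁻¹) := by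
        refine Finset.sum_congr rfl fun f hf => ?_
        rw [hfib f hf, hG m]
    _ = c m * ∏ k, normEsymm (δ k) (m k) (z k) := by
        rw [← Finset.sum_mul]
        have hns : ∏ k, normEsymm (δ k) (m k) (z k)
            = (∏ k, (((δ k).choose (m k) : ℝ))⁻¹) *
              ∑ f ∈ Fintype.piFinset
                (fun k => Finset.powersetCard (m k) (Finset.univ : Finset (Fin (δ k)))),
                ∏ k, ∏ i ∈ f k, z k i := by
          rw [← Finset.prod_univ_sum
              (fun k => Finset.powersetCard ((m k : ℕ)) (Finset.univ : Finset (Fin (δ k))))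
              (fun k s => ∏ i ∈ s, z k i),
            ← Finset.prod_mul_distrib]
          exact Finset.prod_congr rfl fun k _ => rfl
        rw [hns]
        ring
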